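/- For every i = 1,…,n−1, the operators T_i on ℚFl(V) satisfy the braid relation T_i T_{i+1} T_i = T_{i+1} T_i T_{i+1}. -/

import Mathlib

/-!
Let `q` be a prime power and `F = 𝔽_q` the field with `q` elements, `n ≥ 1`,
`V = F^(n+1)`.  `CompleteFlag F n` is the set of complete flags on `V` and `T i` the
"random modification at step `i`" operator on the ℚ-vector space with basis the flags
(it sends a flag `(V_j)` to the sum of all flags `(V_j')` with `V_j' = V_j` for `j ≠ i`
and `V_i' ≠ V_i`).

STATEMENT 1: for every `i = 1, …, n−1` the braid relation
`T i ∘ T (i+1) ∘ T i = T (i+1) ∘ T i ∘ T (i+1)` holds.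
-/

structure CompleteFlag (F : Type) [Field F] (n : ℕ) where
  toFun : Fin (n + 2) → Submodule F (Fin (n + 1) → F)
  mono : Monotone toFun
  rank : ∀ i : Fin (n + 2), Module.finrank F (toFun i) = (i : ℕ)

instance (F : Type) [Field F] [Fintype F] (n : ℕ) : Finite (CompleteFlag F n) := by
  have : Finite (Submodule F (Fin (n + 1) → F)) :=
    Finite.of_injective (fun s => (s : Set (Fin (n + 1) → F))) SetLike.coe_injective
  exact Finite.of_injective (fun W => W.toFun)
    (fun W W' h => by cases W; cases W'; simpa using h)

noncomputable instance (F : Type) [Field F] [Fintype F] (n : ℕ) :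
    Fintype (CompleteFlag F n) := Fintype.ofFinite _

open Classical in
/-- The operator `Tᵢ` on `ℚ Fl(V)`: it sends a flag `(V_j)_j` to the sum of all flags
`(V_j')_j` with `V_j' = V_j` for `j ≠ i` and `V_i' ≠ V_i`. -/
noncomputable def T (F : Type) [Field F] [Fintype F] (n : ℕ) (i : Fin (n + 2)) :
    (CompleteFlag F n → ℚ) →ₗ[ℚ] (CompleteFlag F n → ℚ) where
  toFun f := fun W => ∑ V : CompleteFlag F n,
    if (∀ j, j ≠ i → V.toFun j = W.toFun j) ∧ V.toFun i ≠ W.toFun i then f V else 0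
  map_add' f g := by
    funext W
    simp only [Pi.add_apply]
    rw [← Finset.sum_add_distrib]
    refine Finset.sum_congr rfl fun V _ => ?_
    split <;> simp
  map_smul' c f := by
    funext W
    simp only [Pi.smul_apply, RingHom.id_apply, smul_eq_mul, Finset.mul_sum]
    refine Finset.sum_congr rfl fun V _ => ?_
    split <;> simp



section SumLemmas
variable {α : Type*} [Fintype α]

lemma triple_sum (P Q R : α → α → Prop)
    [∀ a b, Decidable (P a b)] [∀ a b, Decidable (Q a b)] [∀ a b, Decidable (R a b)]
    (f : α → ℚ) (w : α) :
    (∑ v, if P v w then (∑ u, if Q u v then (∑ x, if R x u then f x else 0) else 0) else 0)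
      = ∑ x, (∑ v, ∑ u, if P v w ∧ Q u v ∧ R x u then (1 : ℚ) else 0) * f x := by
  have h1 : ∀ v, (if P v w then
        (∑ u, if Q u v then (∑ x, if R x u then f x else 0) else 0) else 0)
      = ∑ u, ∑ x, if P v w ∧ Q u v ∧ R x u then f x else 0 := by
    intro v
    by_cases hp : P v w
    · simp only [hp, if_true, true_and]
      refine Finset.sum_congr rfl fun u _ => ?_
      by_cases hq : Q u v
      · simp only [hq, if_true, true_and]
      · simp [hq]
    · simp [hp]
  calc (∑ v, if P v w then
        (∑ u, if Q u v then (∑ x, if R x u then f x else 0) else 0) else 0)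
      = ∑ v, ∑ x, ∑ u, if P v w ∧ Q u v ∧ R x u then f x else 0 :=
        Finset.sum_congr rfl fun v _ => (h1 v).trans Finset.sum_comm
    _ = ∑ x, ∑ v, ∑ u, if P v w ∧ Q u v ∧ R x u then f x else 0 := Finset.sum_comm
    _ = ∑ x, (∑ v, ∑ u, if P v w ∧ Q u v ∧ R x u then (1 : ℚ) else 0) * f x := by
        refine Finset.sum_congr rfl fun x _ => ?_
        rw [Finset.sum_mul]
        refine Finset.sum_congr rfl fun v _ => ?_
        rw [Finset.sum_mul]
        refine Finset.sum_congr rfl fun u _ => ?_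
        split <;> simp

lemma pair_count_eq (P Q : α → α → Prop)
    [∀ a b, Decidable (P a b)] [∀ a b, Decidable (Q a b)]
    (hP : ∀ a b a' b', P a b → P a' b' → a = a' ∧ b = b')
    (hQ : ∀ a b a' b', Q a b → Q a' b' → a = a' ∧ b = b')
    (hiff : (∃ a b, P a b) ↔ (∃ a b, Q a b)) :
    (∑ a, ∑ b, if P a b then (1 : ℚ) else 0)
      = ∑ a, ∑ b, if Q a b then (1 : ℚ) else 0 := by
  have key : ∀ (S : α → α → Prop) [∀ a b, Decidable (S a b)],
      (∀ a b a' b', S a b → S a' b' → a = a' ∧ b = b') →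
      (∑ a, ∑ b, if S a b then (1 : ℚ) else 0) = if ∃ a b, S a b then 1 else 0 := by
    intro S _ hS
    classical
    by_cases h : ∃ a b, S a b
    · obtain ⟨a₀, b₀, h₀⟩ := h
      have hiffS : ∀ a b, S a b ↔ (a = a₀ ∧ b = b₀) := fun a b =>
        ⟨fun hab => hS a b a₀ b₀ hab h₀, by rintro ⟨rfl, rfl⟩; exact h₀⟩
      have hrw : ∀ a b, (if S a b then (1 : ℚ) else 0)
          = if (a = a₀ ∧ b = b₀) then (1 : ℚ) else 0 := by
        intro a b
        by_cases hab : S a b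
        · rw [if_pos hab, if_pos ((hiffS a b).1 hab)]
        · rw [if_neg hab, if_neg (fun hc => hab ((hiffS a b).2 hc))]
      simp only [hrw]
      rw [if_pos (⟨a₀, b₀, h₀⟩ : ∃ a b, S a b)]
      rw [Finset.sum_eq_single a₀]
      · rw [Finset.sum_eq_single b₀]
        · simp
        · intro b _ hb; simp [hb]
        · simp
      · intro a _ ha; simp [ha]
      · simp
    · push_neg at h
      simp [h]
  rw [key P hP, key Q hQ]
  simp only [hiff]
end SumLemmas

section DimLemmas
open Module
variable {K V : Type} [Field K] [AddCommGroup V] [Module K V] [FiniteDimensional K V]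

lemma eq_of_le_of_finrank_eq' {p q : Submodule K V} (h : p ≤ q)
    (hr : finrank K p = finrank K q) : p = q :=
  Submodule.eq_of_le_of_finrank_le h hr.ge

lemma finrank_inf_of_ne {P₁ P₂ D : Submodule K V} {d : ℕ} (h1 : P₁ ≤ D) (h2 : P₂ ≤ D)
    (r1 : finrank K P₁ = d + 1) (r2 : finrank K P₂ = d + 1) (rD : finrank K D = d + 2)
    (hne : P₁ ≠ P₂) : finrank K ↥(P₁ ⊓ P₂) = d := by
  have hsum := Submodule.finrank_sup_add_finrank_inf_eq P₁ P₂
  have hle : finrank K ↥(P₁ ⊔ P₂) ≤ d + 2 := rD ▸ Submodule.finrank_mono (sup_le h1 h2)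
  have hgt : ¬ finrank K ↥(P₁ ⊔ P₂) ≤ d + 1 := by
    intro hle'
    have e1 : P₁ = P₁ ⊔ P₂ :=
      Submodule.eq_of_le_of_finrank_le le_sup_left (by omega)
    have e2 : P₂ ≤ P₁ := e1 ▸ le_sup_right
    exact hne (Submodule.eq_of_le_of_finrank_le e2 (by omega)).symm
  omega

lemma finrank_sup_of_ne {L₁ L₂ A : Submodule K V} {d : ℕ} (hA1 : A ≤ L₁) (hA2 : A ≤ L₂)
    (rA : finrank K A = d) (r1 : finrank K L₁ = d + 1) (r2 : finrank K L₂ = d + 1)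
    (hne : L₁ ≠ L₂) : finrank K ↥(L₁ ⊔ L₂) = d + 2 := by
  have hsum := Submodule.finrank_sup_add_finrank_inf_eq L₁ L₂
  have hge : d ≤ finrank K ↥(L₁ ⊓ L₂) := rA ▸ Submodule.finrank_mono (le_inf hA1 hA2)
  have hlt : ¬ d + 1 ≤ finrank K ↥(L₁ ⊓ L₂) := by
    intro hge'
    have e1 : L₁ ⊓ L₂ = L₁ :=
      Submodule.eq_of_le_of_finrank_le inf_le_left (by omega)
    have e2 : L₁ ≤ L₂ := e1 ▸ inf_le_right
    exact hne (Submodule.eq_of_le_of_finrank_le e2 (by omega))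
  omega
end DimLemmas

namespace CompleteFlag
variable {F : Type} [Field F] {n : ℕ}

lemma ext' {W W' : CompleteFlag F n} (h : ∀ j, W.toFun j = W'.toFun j) : W = W' := by
  cases W; cases W'
  simp only [mk.injEq]
  exact funext h

def modify (W : CompleteFlag F n) (k : Fin (n + 2)) (S : Submodule F (Fin (n + 1) → F))
    (hlo : ∀ j, j < k → W.toFun j ≤ S) (hhi : ∀ j, k < j → S ≤ W.toFun j)
    (hr : Module.finrank F S = (k : ℕ)) : CompleteFlag F n where
  toFun j := if j = k then S else W.toFun j
  mono := by
    intro a b hab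
    by_cases ha : a = k <;> by_cases hb : b = k <;> simp only [ha, hb, if_pos, if_neg,
      ite_true, ite_false]
    · exact le_rfl
    · exact hhi b (lt_of_le_of_ne (ha ▸ hab) (Ne.symm hb))
    · exact hlo a (lt_of_le_of_ne (hb ▸ hab) ha)
    · exact W.mono hab
  rank j := by
    show Module.finrank F ↥(if j = k then S else W.toFun j) = (j : ℕ)
    by_cases h : j = k
    · subst h; rw [if_pos rfl]; exact hr
    · rw [if_neg h]; exact W.rank j

lemma modify_toFun (W : CompleteFlag F n) (k : Fin (n + 2)) (S) (hlo) (hhi) (hr)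
    (j : Fin (n + 2)) :
    (W.modify k S hlo hhi hr).toFun j = if j = k then S else W.toFun j := rfl

end CompleteFlag

section Main
open Module
variable {F : Type} [Field F] [Fintype F] {n : ℕ}

/-- The condition that `(V, U)` is a chain `W →ᵢ V →_{i'} U ←ᵢ X` of modifications. -/
def CondP (a b : Fin (n + 2)) (W X V U : CompleteFlag F n) : Prop :=
  ((∀ j, j ≠ a → V.toFun j = W.toFun j) ∧ V.toFun a ≠ W.toFun a) ∧
  ((∀ j, j ≠ b → U.toFun j = V.toFun j) ∧ U.toFun b ≠ V.toFun b) ∧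
  ((∀ j, j ≠ a → X.toFun j = U.toFun j) ∧ X.toFun a ≠ U.toFun a)

variable {i i' : Fin (n + 2)}

lemma structP (hn : 1 ≤ n) (hii' : (i' : ℕ) = (i : ℕ) + 1)
    (hi1 : 1 ≤ (i : ℕ)) (hi2 : (i : ℕ) ≤ n - 1)
    (W X V U : CompleteFlag F n) (h : CondP i i' W X V U) :
    (∀ j, j ≠ i → j ≠ i' → X.toFun j = W.toFun j) ∧
    X.toFun i' ≠ W.toFun i' ∧
    finrank F ↥(W.toFun i' ⊓ X.toFun i') = (i : ℕ) ∧
    V.toFun i = W.toFun i' ⊓ X.toFun i' ∧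
    W.toFun i' ⊓ X.toFun i' ≠ W.toFun i ∧
    W.toFun i' ⊓ X.toFun i' ≠ X.toFun i ∧
    (∀ j, j ≠ i' → U.toFun j = V.toFun j) ∧ U.toFun i' = X.toFun i' := by
  obtain ⟨⟨hVW, hVi⟩, ⟨hUV, hUi'⟩, ⟨hXU, hXi⟩⟩ := h
  have hii : i ≠ i' := Fin.ne_of_val_ne (by omega)
  have hi'i : i' ≠ i := Fin.ne_of_val_ne (by omega)
  have hip2lt : (i : ℕ) + 2 < n + 2 := by omega
  set ip2 : Fin (n + 2) := ⟨(i : ℕ) + 2, hip2lt⟩ with hip2def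
  have hip2v : (ip2 : ℕ) = (i : ℕ) + 2 := rfl
  have hlei : i ≤ i' := by rw [Fin.le_def]; omega
  have compat : ∀ j, j ≠ i → j ≠ i' → X.toFun j = W.toFun j := fun j hj hj' =>
    (hXU j hj).trans ((hUV j hj').trans (hVW j hj))
  have hUVi : U.toFun i = V.toFun i := hUV i hii
  have hXU' : X.toFun i' = U.toFun i' := hXU i' hi'i
  have hVW' : V.toFun i' = W.toFun i' := hVW i' hi'i
  have hXW' : X.toFun i' ≠ W.toFun i' := by rw [hXU', ← hVW']; exact hUi'
  have hXip2 : X.toFun ip2 = W.toFun ip2 :=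
    compat ip2 (Fin.ne_of_val_ne (by rw [hip2v]; omega))
      (Fin.ne_of_val_ne (by rw [hip2v]; omega))
  have rW' : finrank F ↥(W.toFun i') = (i : ℕ) + 1 := by rw [W.rank i', hii']
  have rX' : finrank F ↥(X.toFun i') = (i : ℕ) + 1 := by rw [X.rank i', hii']
  have rD : finrank F ↥(W.toFun ip2) = (i : ℕ) + 2 := W.rank ip2
  have hWD : W.toFun i' ≤ W.toFun ip2 := W.mono (by rw [Fin.le_def, hip2v]; omega)
  have hXD : X.toFun i' ≤ W.toFun ip2 :=
    hXip2 ▸ X.mono (by rw [Fin.le_def, hip2v]; omega)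
  have rInf : finrank F ↥(W.toFun i' ⊓ X.toFun i') = (i : ℕ) :=
    finrank_inf_of_ne hWD hXD rW' rX' rD (Ne.symm hXW')
  have hVle : V.toFun i ≤ W.toFun i' ⊓ X.toFun i' := by
    refine le_inf ?_ ?_
    · rw [← hVW']; exact V.mono hlei
    · rw [hXU', ← hUVi]; exact U.mono hlei
  have hVeq : V.toFun i = W.toFun i' ⊓ X.toFun i' :=
    eq_of_le_of_finrank_eq' hVle (by rw [V.rank i, rInf])
  refine ⟨compat, hXW', rInf, hVeq, ?_, ?_, hUV, hXU'.symm⟩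
  · rw [← hVeq]; exact hVi
  · rw [← hVeq, ← hUVi]; exact Ne.symm hXi

lemma structQ (hn : 1 ≤ n) (hii' : (i' : ℕ) = (i : ℕ) + 1)
    (hi1 : 1 ≤ (i : ℕ)) (hi2 : (i : ℕ) ≤ n - 1)
    (W X V U : CompleteFlag F n) (h : CondP i' i W X V U) :
    (∀ j, j ≠ i → j ≠ i' → X.toFun j = W.toFun j) ∧
    X.toFun i ≠ W.toFun i ∧
    finrank F ↥(W.toFun i ⊔ X.toFun i) = (i : ℕ) + 1 ∧
    V.toFun i' = W.toFun i ⊔ X.toFun i ∧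
    W.toFun i ⊔ X.toFun i ≠ W.toFun i' ∧
    W.toFun i ⊔ X.toFun i ≠ X.toFun i' ∧
    (∀ j, j ≠ i → U.toFun j = V.toFun j) ∧ U.toFun i = X.toFun i := by
  obtain ⟨⟨hVW, hVi'⟩, ⟨hUV, hUi⟩, ⟨hXU, hXi'⟩⟩ := h
  have hii : i ≠ i' := Fin.ne_of_val_ne (by omega)
  have hi'i : i' ≠ i := Fin.ne_of_val_ne (by omega)
  have him1lt : (i : ℕ) - 1 < n + 2 := by omega
  set im1 : Fin (n + 2) := ⟨(i : ℕ) - 1, him1lt⟩ with him1def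
  have him1v : (im1 : ℕ) = (i : ℕ) - 1 := rfl
  have hlei : i ≤ i' := by rw [Fin.le_def]; omega
  have compat : ∀ j, j ≠ i → j ≠ i' → X.toFun j = W.toFun j := fun j hj hj' =>
    (hXU j hj').trans ((hUV j hj).trans (hVW j hj'))
  have hVWi : V.toFun i = W.toFun i := hVW i hii
  have hXUi : X.toFun i = U.toFun i := hXU i hii
  have hUVi' : U.toFun i' = V.toFun i' := hUV i' hi'i
  have hXWi : X.toFun i ≠ W.toFun i := by rw [hXUi, ← hVWi]; exact hUi
  have hWim1 : X.toFun im1 = W.toFun im1 :=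
    compat im1 (Fin.ne_of_val_ne (by rw [him1v]; omega))
      (Fin.ne_of_val_ne (by rw [him1v]; omega))
  have hA1 : W.toFun im1 ≤ W.toFun i := W.mono (by rw [Fin.le_def, him1v]; omega)
  have hA2 : W.toFun im1 ≤ X.toFun i := by
    rw [← hWim1]; exact X.mono (by rw [Fin.le_def, him1v]; omega)
  have rA : finrank F ↥(W.toFun im1) = (i : ℕ) - 1 := W.rank im1
  have rWi : finrank F ↥(W.toFun i) = ((i : ℕ) - 1) + 1 := by rw [W.rank i]; omega
  have rXi : finrank F ↥(X.toFun i) = ((i : ℕ) - 1) + 1 := by rw [X.rank i]; omega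
  have rSp : finrank F ↥(W.toFun i ⊔ X.toFun i) = (i : ℕ) + 1 := by
    have := finrank_sup_of_ne hA1 hA2 rA rWi rXi (Ne.symm hXWi)
    omega
  have hSple : W.toFun i ⊔ X.toFun i ≤ V.toFun i' := by
    refine sup_le ?_ ?_
    · rw [← hVWi]; exact V.mono hlei
    · rw [hXUi, ← hUVi']; exact U.mono hlei
  have hVeq : V.toFun i' = W.toFun i ⊔ X.toFun i :=
    (eq_of_le_of_finrank_eq' hSple (by rw [rSp, V.rank i', hii'])).symm
  refine ⟨compat, hXWi, rSp, hVeq, ?_, ?_, hUV, hXUi.symm⟩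
  · rw [← hVeq]; exact hVi'
  · rw [← hVeq, ← hUVi']; exact Ne.symm hXi'


lemma uniqP (hn : 1 ≤ n) (hii' : (i' : ℕ) = (i : ℕ) + 1)
    (hi1 : 1 ≤ (i : ℕ)) (hi2 : (i : ℕ) ≤ n - 1)
    (W X : CompleteFlag F n) (V U V₂ U₂ : CompleteFlag F n)
    (h : CondP i i' W X V U) (h₂ : CondP i i' W X V₂ U₂) : V = V₂ ∧ U = U₂ := by
  obtain ⟨_, _, _, hVeq, _, _, hUdet, hUi'⟩ := structP hn hii' hi1 hi2 W X V U h
  obtain ⟨_, _, _, hVeq₂, _, _, hUdet₂, hUi'₂⟩ := structP hn hii' hi1 hi2 W X V₂ U₂ h₂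
  have hV : V = V₂ := by
    refine CompleteFlag.ext' fun j => ?_
    by_cases hj : j = i
    · subst hj; rw [hVeq, hVeq₂]
    · rw [h.1.1 j hj, h₂.1.1 j hj]
  refine ⟨hV, CompleteFlag.ext' fun j => ?_⟩
  by_cases hj : j = i'
  · subst hj; rw [hUi', hUi'₂]
  · rw [hUdet j hj, hUdet₂ j hj, hV]

lemma uniqQ (hn : 1 ≤ n) (hii' : (i' : ℕ) = (i : ℕ) + 1)
    (hi1 : 1 ≤ (i : ℕ)) (hi2 : (i : ℕ) ≤ n - 1)
    (W X : CompleteFlag F n) (V U V₂ U₂ : CompleteFlag F n)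
    (h : CondP i' i W X V U) (h₂ : CondP i' i W X V₂ U₂) : V = V₂ ∧ U = U₂ := by
  obtain ⟨_, _, _, hVeq, _, _, hUdet, hUi⟩ := structQ hn hii' hi1 hi2 W X V U h
  obtain ⟨_, _, _, hVeq₂, _, _, hUdet₂, hUi₂⟩ := structQ hn hii' hi1 hi2 W X V₂ U₂ h₂
  have hV : V = V₂ := by
    refine CompleteFlag.ext' fun j => ?_
    by_cases hj : j = i'
    · subst hj; rw [hVeq, hVeq₂]
    · rw [h.1.1 j hj, h₂.1.1 j hj]
  refine ⟨hV, CompleteFlag.ext' fun j => ?_⟩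
  by_cases hj : j = i
  · subst hj; rw [hUi, hUi₂]
  · rw [hUdet j hj, hUdet₂ j hj, hV]


lemma existsPQ (hn : 1 ≤ n) (hii' : (i' : ℕ) = (i : ℕ) + 1)
    (hi1 : 1 ≤ (i : ℕ)) (hi2 : (i : ℕ) ≤ n - 1) (W X : CompleteFlag F n)
    (h : ∃ V U, CondP i i' W X V U) : ∃ V U, CondP i' i W X V U := by
  obtain ⟨V, U, h⟩ := h
  obtain ⟨compat, hXW', rInf, hVeq, hMW, hMX, -, -⟩ := structP hn hii' hi1 hi2 W X V U h
  have hii : i ≠ i' := Fin.ne_of_val_ne (by omega)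
  have hi'i : i' ≠ i := Fin.ne_of_val_ne (by omega)
  have hlei : i ≤ i' := by rw [Fin.le_def]; omega
  have hip2lt : (i : ℕ) + 2 < n + 2 := by omega
  set ip2 : Fin (n + 2) := ⟨(i : ℕ) + 2, hip2lt⟩ with hip2def
  have hip2v : (ip2 : ℕ) = (i : ℕ) + 2 := rfl
  have him1lt : (i : ℕ) - 1 < n + 2 := by omega
  set im1 : Fin (n + 2) := ⟨(i : ℕ) - 1, him1lt⟩ with him1def
  have him1v : (im1 : ℕ) = (i : ℕ) - 1 := rfl
  have hXip2 : X.toFun ip2 = W.toFun ip2 :=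
    compat ip2 (Fin.ne_of_val_ne (by rw [hip2v]; omega))
      (Fin.ne_of_val_ne (by rw [hip2v]; omega))
  have hXim1 : X.toFun im1 = W.toFun im1 :=
    compat im1 (Fin.ne_of_val_ne (by rw [him1v]; omega))
      (Fin.ne_of_val_ne (by rw [him1v]; omega))
  -- W_i ≠ X_i
  have hWXi : W.toFun i ≠ X.toFun i := by
    intro he
    refine hMW (eq_of_le_of_finrank_eq' (le_inf (W.mono hlei) ?_)
      (by rw [W.rank i, rInf])).symm
    rw [he]; exact X.mono hlei
  -- rank of the sup
  have rSp : finrank F ↥(W.toFun i ⊔ X.toFun i) = (i : ℕ) + 1 := by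
    have hA1 : W.toFun im1 ≤ W.toFun i := W.mono (by rw [Fin.le_def, him1v]; omega)
    have hA2 : W.toFun im1 ≤ X.toFun i := by
      rw [← hXim1]; exact X.mono (by rw [Fin.le_def, him1v]; omega)
    have rWi : finrank F ↥(W.toFun i) = ((i : ℕ) - 1) + 1 := by rw [W.rank i]; omega
    have rXi : finrank F ↥(X.toFun i) = ((i : ℕ) - 1) + 1 := by rw [X.rank i]; omega
    have := finrank_sup_of_ne hA1 hA2 (W.rank im1) rWi rXi hWXi
    omega
  have hSpW' : W.toFun i ⊔ X.toFun i ≠ W.toFun i' := by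
    intro he
    refine hMX (eq_of_le_of_finrank_eq' (le_inf ?_ (X.mono hlei))
      (by rw [X.rank i, rInf])).symm
    rw [← he]; exact le_sup_right
  have hSpX' : W.toFun i ⊔ X.toFun i ≠ X.toFun i' := by
    intro he
    refine hMW (eq_of_le_of_finrank_eq' (le_inf (W.mono hlei) ?_)
      (by rw [W.rank i, rInf])).symm
    rw [← he]; exact le_sup_left
  -- construct the new pair
  have hlo : ∀ j, j < i' → W.toFun j ≤ W.toFun i ⊔ X.toFun i := by
    intro j hj
    exact le_trans (W.mono (by rw [Fin.le_def]; rw [Fin.lt_def] at hj; omega)) le_sup_left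
  have hhi : ∀ j, i' < j → W.toFun i ⊔ X.toFun i ≤ W.toFun j := by
    intro j hj
    rw [Fin.lt_def] at hj
    refine sup_le (W.mono (by rw [Fin.le_def]; omega)) ?_
    calc X.toFun i ≤ X.toFun ip2 := X.mono (by rw [Fin.le_def, hip2v]; omega)
      _ = W.toFun ip2 := hXip2
      _ ≤ W.toFun j := W.mono (by rw [Fin.le_def, hip2v]; omega)
  set V' : CompleteFlag F n := W.modify i' (W.toFun i ⊔ X.toFun i) hlo hhi
    (by rw [hii']; exact rSp) with hV'def
  have hV'j : ∀ j, V'.toFun j = if j = i' then W.toFun i ⊔ X.toFun i else W.toFun j :=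
    fun j => rfl
  have hlo' : ∀ j, j < i → V'.toFun j ≤ X.toFun i := by
    intro j hj
    rw [Fin.lt_def] at hj
    rw [hV'j, if_neg (Fin.ne_of_val_ne (by omega))]
    calc W.toFun j ≤ W.toFun im1 := W.mono (by rw [Fin.le_def, him1v]; omega)
      _ = X.toFun im1 := hXim1.symm
      _ ≤ X.toFun i := X.mono (by rw [Fin.le_def, him1v]; omega)
  have hhi' : ∀ j, i < j → X.toFun i ≤ V'.toFun j := by
    intro j hj
    rw [Fin.lt_def] at hj
    rw [hV'j]
    by_cases hji' : j = i'
    · rw [if_pos hji']; exact le_sup_right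
    · rw [if_neg hji']
      have hj2 : (i : ℕ) + 2 ≤ (j : ℕ) := by
        have := Fin.val_ne_of_ne hji'; omega
      calc X.toFun i ≤ X.toFun ip2 := X.mono (by rw [Fin.le_def, hip2v]; omega)
        _ = W.toFun ip2 := hXip2
        _ ≤ W.toFun j := W.mono (by rw [Fin.le_def, hip2v]; omega)
  set U' : CompleteFlag F n := V'.modify i (X.toFun i) hlo' hhi' (X.rank i) with hU'def
  have hU'j : ∀ j, U'.toFun j = if j = i then X.toFun i else V'.toFun j := fun j => rfl
  refine ⟨V', U', ⟨fun j hj => by rw [hV'j, if_neg hj], ?_⟩,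
    ⟨fun j hj => by rw [hU'j, if_neg hj], ?_⟩, ⟨?_, ?_⟩⟩
  · rw [hV'j, if_pos rfl]; exact hSpW'
  · rw [hU'j, if_pos rfl, hV'j, if_neg hii]
    exact fun he => hWXi he.symm
  · intro j hj
    by_cases hji : j = i
    · subst hji; rw [hU'j, if_pos rfl]
    · rw [hU'j, if_neg hji, hV'j, if_neg hj]
      exact compat j hji hj
  · rw [hU'j, if_neg hi'i, hV'j, if_pos rfl]
    exact fun he => hSpX' he.symm

lemma existsQP (hn : 1 ≤ n) (hii' : (i' : ℕ) = (i : ℕ) + 1)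
    (hi1 : 1 ≤ (i : ℕ)) (hi2 : (i : ℕ) ≤ n - 1) (W X : CompleteFlag F n)
    (h : ∃ V U, CondP i' i W X V U) : ∃ V U, CondP i i' W X V U := by
  obtain ⟨V, U, h⟩ := h
  obtain ⟨compat, hXWi, rSp, hVeq, hSpW', hSpX', -, -⟩ := structQ hn hii' hi1 hi2 W X V U h
  have hii : i ≠ i' := Fin.ne_of_val_ne (by omega)
  have hi'i : i' ≠ i := Fin.ne_of_val_ne (by omega)
  have hlei : i ≤ i' := by rw [Fin.le_def]; omega
  have hip2lt : (i : ℕ) + 2 < n + 2 := by omega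
  set ip2 : Fin (n + 2) := ⟨(i : ℕ) + 2, hip2lt⟩ with hip2def
  have hip2v : (ip2 : ℕ) = (i : ℕ) + 2 := rfl
  have him1lt : (i : ℕ) - 1 < n + 2 := by omega
  set im1 : Fin (n + 2) := ⟨(i : ℕ) - 1, him1lt⟩ with him1def
  have him1v : (im1 : ℕ) = (i : ℕ) - 1 := rfl
  have hXip2 : X.toFun ip2 = W.toFun ip2 :=
    compat ip2 (Fin.ne_of_val_ne (by rw [hip2v]; omega))
      (Fin.ne_of_val_ne (by rw [hip2v]; omega))
  have hXim1 : X.toFun im1 = W.toFun im1 :=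
    compat im1 (Fin.ne_of_val_ne (by rw [him1v]; omega))
      (Fin.ne_of_val_ne (by rw [him1v]; omega))
  have hW'X' : W.toFun i' ≠ X.toFun i' := by
    intro he
    refine hSpW' (eq_of_le_of_finrank_eq' (sup_le (W.mono hlei) ?_)
      (by rw [rSp, W.rank i', hii']))
    exact le_trans (X.mono hlei) (le_of_eq he.symm)
  have rM : finrank F ↥(W.toFun i' ⊓ X.toFun i') = (i : ℕ) := by
    have hWD : W.toFun i' ≤ W.toFun ip2 := W.mono (by rw [Fin.le_def, hip2v]; omega)
    have hXD : X.toFun i' ≤ W.toFun ip2 := by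
      rw [← hXip2]; exact X.mono (by rw [Fin.le_def, hip2v]; omega)
    exact finrank_inf_of_ne hWD hXD (by rw [W.rank i', hii']) (by rw [X.rank i', hii'])
      (W.rank ip2) hW'X'
  have hMW : W.toFun i' ⊓ X.toFun i' ≠ W.toFun i := by
    intro he
    refine hSpX' (eq_of_le_of_finrank_eq' (sup_le ?_ (X.mono hlei))
      (by rw [rSp, X.rank i', hii']))
    exact le_trans (le_of_eq he.symm) inf_le_right
  have hMX : W.toFun i' ⊓ X.toFun i' ≠ X.toFun i := by
    intro he
    refine hSpW' (eq_of_le_of_finrank_eq' (sup_le (W.mono hlei) ?_)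
      (by rw [rSp, W.rank i', hii']))
    exact le_trans (le_of_eq he.symm) inf_le_left
  have hlo : ∀ j, j < i → W.toFun j ≤ W.toFun i' ⊓ X.toFun i' := by
    intro j hj
    rw [Fin.lt_def] at hj
    have h1 : W.toFun j ≤ W.toFun im1 := W.mono (by rw [Fin.le_def, him1v]; omega)
    refine le_trans h1 (le_inf (W.mono (by rw [Fin.le_def, him1v]; omega)) ?_)
    rw [← hXim1]; exact X.mono (by rw [Fin.le_def, him1v]; omega)
  have hhi : ∀ j, i < j → W.toFun i' ⊓ X.toFun i' ≤ W.toFun j := by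
    intro j hj
    rw [Fin.lt_def] at hj
    exact le_trans inf_le_left (W.mono (by rw [Fin.le_def]; omega))
  set V' : CompleteFlag F n := W.modify i (W.toFun i' ⊓ X.toFun i') hlo hhi rM with hV'def
  have hV'j : ∀ j, V'.toFun j = if j = i then W.toFun i' ⊓ X.toFun i' else W.toFun j :=
    fun j => rfl
  have hlo' : ∀ j, j < i' → V'.toFun j ≤ X.toFun i' := by
    intro j hj
    rw [Fin.lt_def] at hj
    rw [hV'j]
    by_cases hji : j = i
    · rw [if_pos hji]; exact inf_le_right
    · rw [if_neg hji]
      have hj2 : (j : ℕ) ≤ (i : ℕ) - 1 := by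
        have := Fin.val_ne_of_ne hji; omega
      calc W.toFun j ≤ W.toFun im1 := W.mono (by rw [Fin.le_def, him1v]; omega)
        _ = X.toFun im1 := hXim1.symm
        _ ≤ X.toFun i' := X.mono (by rw [Fin.le_def, him1v]; omega)
  have hhi' : ∀ j, i' < j → X.toFun i' ≤ V'.toFun j := by
    intro j hj
    rw [Fin.lt_def] at hj
    rw [hV'j, if_neg (Fin.ne_of_val_ne (by omega))]
    calc X.toFun i' ≤ X.toFun ip2 := X.mono (by rw [Fin.le_def, hip2v]; omega)
      _ = W.toFun ip2 := hXip2
      _ ≤ W.toFun j := W.mono (by rw [Fin.le_def, hip2v]; omega)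
  set U' : CompleteFlag F n := V'.modify i' (X.toFun i') hlo' hhi' (X.rank i') with hU'def
  have hU'j : ∀ j, U'.toFun j = if j = i' then X.toFun i' else V'.toFun j := fun j => rfl
  refine ⟨V', U', ⟨fun j hj => by rw [hV'j, if_neg hj], ?_⟩,
    ⟨fun j hj => by rw [hU'j, if_neg hj], ?_⟩, ⟨?_, ?_⟩⟩
  · rw [hV'j, if_pos rfl]; exact hMW
  · rw [hU'j, if_pos rfl, hV'j, if_neg hi'i]
    exact fun he => hW'X' he.symm
  · intro j hj
    by_cases hji' : j = i'
    · subst hji'; rw [hU'j, if_pos rfl]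
    · rw [hU'j, if_neg hji', hV'j, if_neg hj]
      exact compat j hj hji'
  · rw [hU'j, if_neg hii, hV'j, if_pos rfl]
    exact fun he => hMX he.symm



end Main

/-- For `i = 1, …, n−1` the braid relation
`Tᵢ T_{i+1} Tᵢ = T_{i+1} Tᵢ T_{i+1}` holds. -/
theorem hecke_braid_relation (F : Type) [Field F] [Fintype F] (n : ℕ) (hn : 1 ≤ n)
    (i i' : Fin (n + 2)) (hii' : (i' : ℕ) = (i : ℕ) + 1)
    (hi1 : 1 ≤ (i : ℕ)) (hi2 : (i : ℕ) ≤ n - 1) :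
    (T F n i) ∘ₗ (T F n i') ∘ₗ (T F n i)
      = (T F n i') ∘ₗ (T F n i) ∘ₗ (T F n i') := by
  classical
  apply LinearMap.ext
  intro f
  funext W0
  show (T F n i) ((T F n i') ((T F n i) f)) W0 = (T F n i') ((T F n i) ((T F n i') f)) W0
  have unfoldT : ∀ (a : Fin (n + 2)) (g : CompleteFlag F n → ℚ) (W : CompleteFlag F n),
      (T F n a) g W = ∑ V : CompleteFlag F n,
        if (∀ j, j ≠ a → V.toFun j = W.toFun j) ∧ V.toFun a ≠ W.toFun a then g V else 0 :=
    fun a g W => rfl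
  simp only [unfoldT]
  rw [triple_sum (fun v w => (∀ j, j ≠ i → v.toFun j = w.toFun j) ∧ v.toFun i ≠ w.toFun i)
      (fun u v => (∀ j, j ≠ i' → u.toFun j = v.toFun j) ∧ u.toFun i' ≠ v.toFun i')
      (fun x u => (∀ j, j ≠ i → x.toFun j = u.toFun j) ∧ x.toFun i ≠ u.toFun i) f W0,
    triple_sum (fun v w => (∀ j, j ≠ i' → v.toFun j = w.toFun j) ∧ v.toFun i' ≠ w.toFun i')
      (fun u v => (∀ j, j ≠ i → u.toFun j = v.toFun j) ∧ u.toFun i ≠ v.toFun i)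
      (fun x u => (∀ j, j ≠ i' → x.toFun j = u.toFun j) ∧ x.toFun i' ≠ u.toFun i') f W0]
  refine Finset.sum_congr rfl fun x _ => ?_
  congr 1
  convert pair_count_eq (fun v u => CondP i i' W0 x v u) (fun v u => CondP i' i W0 x v u)
    (fun a b a' b' h h' => uniqP hn hii' hi1 hi2 W0 x a b a' b' h h')
    (fun a b a' b' h h' => uniqQ hn hii' hi1 hi2 W0 x a b a' b' h h')
    ⟨fun ⟨a, b, h⟩ => existsPQ hn hii' hi1 hi2 W0 x ⟨a, b, h⟩,
     fun ⟨a, b, h⟩ => existsQP hn hii' hi1 hi2 W0 x ⟨a, b, h⟩⟩ using 4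
  all_goals exact Iff.rfl
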